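/- For k ≥ 1, a_k > 0, p(x) = b_k exp(-a_k x^{2k}) with CDF P, and z ∈ ℝ, the solution f_z of the Stein equation satisfies lim_{x→∞} 2k a_k x^{2k-1} f_z(x) = P(z) and lim_{x→-∞} 2k a_k x^{2k-1} f_z(x) = P(z) - 1. -/

import Mathlib

open MeasureTheory Filter Set Topology


lemma aux_integrable (k : ℕ) (hk : 1 ≤ k) (a : ℝ) (ha : 0 < a) :
    Integrable (fun t : ℝ => Real.exp (-a * t ^ (2 * k))) := by
  have hmaj : Integrable (fun t : ℝ => Real.exp a * Real.exp (-a * t ^ 2)) :=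
    (integrable_exp_neg_mul_sq ha).const_mul _
  refine hmaj.mono' (Continuous.aestronglyMeasurable (by fun_prop)) ?_
  filter_upwards with t
  rw [Real.norm_eq_abs, abs_of_pos (Real.exp_pos _), ← Real.exp_add]
  apply Real.exp_le_exp.2
  have key : t ^ 2 - 1 ≤ t ^ (2 * k) := by
    rw [pow_mul]
    rcases le_or_gt ((t:ℝ) ^ 2) 1 with h1 | h1
    · have := pow_nonneg (sq_nonneg t) k; linarith
    · have := le_self_pow₀ h1.le (by omega : k ≠ 0); linarith
  nlinarith [mul_le_mul_of_nonneg_left key ha.le]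

lemma aux_pos (k : ℕ) (hk : 1 ≤ k) (a : ℝ) (ha : 0 < a) :
    0 < ∫ t : ℝ, Real.exp (-a * t ^ (2 * k)) := by
  rw [integral_pos_iff_support_of_nonneg
    (fun t => (Real.exp_pos _).le) (aux_integrable k hk a ha)]
  have : (Function.support fun t : ℝ => Real.exp (-a * t ^ (2 * k))) = Set.univ := by
    ext t; simp [Function.support, Real.exp_ne_zero]
  rw [this]
  simp [Real.volume_univ]

lemma aux_core (m : ℕ) (a : ℝ) (ha : 0 < a) :
    Tendsto (fun x : ℝ => 2 * ((m : ℝ) + 1) * a * x ^ (2 * m + 1) *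
      Real.exp (a * x ^ (2 * m + 2)) * ∫ t in Set.Ioi x, Real.exp (-a * t ^ (2 * m + 2)))
      atTop (nhds 1) := by
  set φ : ℝ → ℝ := fun t => Real.exp (-a * t ^ (2 * m + 2)) with hφ
  have hInt : Integrable φ := by
    have := aux_integrable (m + 1) (by omega) a ha
    simpa [hφ, show 2 * (m + 1) = 2 * m + 2 by ring] using this
  have hcont : Continuous φ := by fun_prop
  set I : ℝ := ∫ t : ℝ, φ t with hI
  set Φ : ℝ → ℝ := fun x => ∫ t in Iic x, φ t with hΦdef
  set F : ℝ → ℝ := fun x => ∫ t in Ioi x, φ t with hFdef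
  have hFeq : ∀ x, F x = I - Φ x := by
    intro x
    have := intervalIntegral.integral_Iic_add_Ioi (μ := volume) (b := x)
      hInt.integrableOn hInt.integrableOn
    simp only [hFdef, hΦdef, hI]; linarith [this]
  have hΦderiv : ∀ x : ℝ, HasDerivAt Φ (φ x) x := by
    intro x
    have h1 : ∀ y : ℝ, Φ y = Φ 0 + ∫ t in (0:ℝ)..y, φ t := by
      intro y
      have := intervalIntegral.integral_Iic_sub_Iic (μ := volume) (f := φ) (a := (0:ℝ)) (b := y)
        hInt.integrableOn hInt.integrableOn
      simp only [hΦdef]; linarith [this]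
    have h2 : HasDerivAt (fun y : ℝ => ∫ t in (0:ℝ)..y, φ t) (φ x) x :=
      (hcont.integral_hasStrictDerivAt 0 x).hasDerivAt
    exact (funext h1 : Φ = _) ▸ (h2.const_add (Φ 0))
  have hFderiv : ∀ x : ℝ, HasDerivAt F (-φ x) x := by
    intro x
    have := (hΦderiv x).const_sub I
    exact (funext hFeq : F = _) ▸ this
  set G : ℝ → ℝ := fun x => Real.exp (-a * x ^ (2 * m + 2)) /
    (2 * ((m : ℝ) + 1) * a * x ^ (2 * m + 1)) with hGdef
  set G' : ℝ → ℝ := fun x => -Real.exp (-a * x ^ (2 * m + 2)) *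
    (1 + (2 * (m : ℝ) + 1) / (2 * ((m : ℝ) + 1) * a * x ^ (2 * m + 2))) with hG'def
  have hGderiv : ∀ x : ℝ, 0 < x → HasDerivAt G (G' x) x := by
    intro x hx
    have hu : HasDerivAt (fun y : ℝ => Real.exp (-a * y ^ (2 * m + 2)))
        (Real.exp (-a * x ^ (2 * m + 2)) * (-a * ((2 * (m:ℝ) + 2) * x ^ (2 * m + 1)))) x := by
      have hp : HasDerivAt (fun y : ℝ => y ^ (2 * m + 2))
          ((2 * (m:ℝ) + 2) * x ^ (2 * m + 1)) x := by
        have := hasDerivAt_pow (2 * m + 2) x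
        simpa [show 2 * m + 2 - 1 = 2 * m + 1 by omega] using this
      exact (hp.const_mul (-a)).exp
    have hv : HasDerivAt (fun y : ℝ => 2 * ((m : ℝ) + 1) * a * y ^ (2 * m + 1))
        (2 * ((m : ℝ) + 1) * a * ((2 * (m:ℝ) + 1) * x ^ (2 * m))) x := by
      have hp : HasDerivAt (fun y : ℝ => y ^ (2 * m + 1))
          ((2 * (m:ℝ) + 1) * x ^ (2 * m)) x := by
        have := hasDerivAt_pow (2 * m + 1) x
        simpa [show 2 * m + 1 - 1 = 2 * m by omega] using this
      exact hp.const_mul _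
    have hvx : 2 * ((m : ℝ) + 1) * a * x ^ (2 * m + 1) ≠ 0 := by positivity
    have := hu.div hv hvx
    refine HasDerivAt.congr_deriv this ?_
    have hx' : x ≠ 0 := ne_of_gt hx
    have ha' : a ≠ 0 := ne_of_gt ha
    simp only [hG'def]
    field_simp
    ring
  have hvpos : ∀ x : ℝ, 0 < x → 0 < 1 + (2 * (m : ℝ) + 1) /
      (2 * ((m : ℝ) + 1) * a * x ^ (2 * m + 2)) := by
    intro x hx; positivity
  have hg'ne : ∀ᶠ x in atTop, G' x ≠ 0 := by
    filter_upwards [eventually_gt_atTop (0:ℝ)] with x hx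
    have h1 := hvpos x hx
    have h2 := Real.exp_pos (-a * x ^ (2 * m + 2))
    simp only [hG'def]
    intro hcon
    nlinarith
  have hΦtop : Tendsto Φ atTop (𝓝 I) := by
    have hcov : AECover (volume : Measure ℝ) atTop (fun i : ℝ => Iic i) :=
      aecover_Iic tendsto_id
    exact hcov.integral_tendsto_of_countably_generated hInt
  have hFtop : Tendsto F atTop (𝓝 0) := by
    have : Tendsto (fun x => I - Φ x) atTop (𝓝 (I - I)) := tendsto_const_nhds.sub hΦtop
    simpa [← funext hFeq] using this
  have hpowtop : Tendsto (fun x : ℝ => 2 * ((m : ℝ) + 1) * a * x ^ (2 * m + 1)) atTop atTop := by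
    apply Tendsto.const_mul_atTop (by positivity)
    exact tendsto_pow_atTop (by omega)
  have hexptop : Tendsto (fun x : ℝ => Real.exp (-a * x ^ (2 * m + 2))) atTop (𝓝 0) := by
    apply Real.tendsto_exp_atBot.comp
    have h1 : Tendsto (fun x : ℝ => a * x ^ (2 * m + 2)) atTop atTop :=
      Tendsto.const_mul_atTop ha (tendsto_pow_atTop (by omega))
    exact (tendsto_neg_atTop_atBot.comp h1).congr (fun x => by simp only [Function.comp_apply]; ring)
  have hGtop : Tendsto G atTop (𝓝 0) := by
    have := hexptop.mul hpowtop.inv_tendsto_atTop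
    simpa [hGdef, div_eq_mul_inv] using this
  have hdivlim : Tendsto (fun x => (-φ x) / G' x) atTop (𝓝 1) := by
    have hc : Tendsto (fun x : ℝ => (2 * (m : ℝ) + 1) /
        (2 * ((m : ℝ) + 1) * a * x ^ (2 * m + 2))) atTop (𝓝 0) :=
      Tendsto.div_atTop tendsto_const_nhds
        (Tendsto.const_mul_atTop (by positivity) (tendsto_pow_atTop (by omega)))
    have h1 : Tendsto (fun x : ℝ => (1 + (2 * (m : ℝ) + 1) /
        (2 * ((m : ℝ) + 1) * a * x ^ (2 * m + 2)))⁻¹) atTop (𝓝 1) := by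
      have := ((tendsto_const_nhds : Tendsto (fun _ : ℝ => (1:ℝ)) atTop (nhds 1)).add hc).inv₀ (by norm_num)
      simpa using this
    apply h1.congr'
    filter_upwards [eventually_gt_atTop (0:ℝ)] with x hx
    have h2 := hvpos x hx
    have h3 : φ x ≠ 0 := Real.exp_ne_zero _
    simp only [hG'def, hφ]
    rw [div_mul_cancel_left₀ (neg_ne_zero.mpr (Real.exp_ne_zero _))]
  have hlh : Tendsto (fun x => F x / G x) atTop (𝓝 1) :=
    HasDerivAt.lhopital_zero_atTop
      (Eventually.of_forall hFderiv)
      (by filter_upwards [eventually_gt_atTop (0:ℝ)] with x hx using hGderiv x hx)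
      hg'ne hFtop hGtop hdivlim
  apply hlh.congr'
  filter_upwards [eventually_gt_atTop (0:ℝ)] with x hx
  have hG : F x / G x = F x * (2 * ((m:ℝ) + 1) * a * x ^ (2 * m + 1)) *
      Real.exp (a * x ^ (2 * m + 2)) := by
    simp only [hGdef]
    rw [show (-a * x ^ (2 * m + 2)) = -(a * x ^ (2 * m + 2)) by ring, Real.exp_neg,
        div_div_eq_mul_div, div_eq_mul_inv, inv_inv]
  rw [hG]; ring

/-- For `p(x) = b exp(-a x^{2k})` with CDF `P`, the Stein solution `f_z` satisfies
`lim_{x→∞} 2k a x^{2k-1} f_z(x) = P(z)` and `lim_{x→-∞} 2k a x^{2k-1} f_z(x) = P(z) - 1`. -/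
theorem stmt9 (k : ℕ) (hk : 1 ≤ k) (a b : ℝ) (ha : 0 < a)
    (hb : b = (∫ t : ℝ, Real.exp (-a * t ^ (2 * k)))⁻¹)
    (P : ℝ → ℝ) (hP : P = fun y => ∫ t in Set.Iic y, b * Real.exp (-a * t ^ (2 * k)))
    (z : ℝ) (f : ℝ → ℝ)
    (hf : f = fun x =>
      if x ≤ z then (1 - P z) * P x * Real.exp (a * x ^ (2 * k)) / b
      else P z * (1 - P x) * Real.exp (a * x ^ (2 * k)) / b) :
    Tendsto (fun x : ℝ => 2 * k * a * x ^ (2 * k - 1) * f x) atTop (nhds (P z))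
    ∧ Tendsto (fun x : ℝ => 2 * k * a * x ^ (2 * k - 1) * f x) atBot (nhds (P z - 1)) := by
  subst hf hP hb
  obtain ⟨m, rfl⟩ : ∃ m, k = m + 1 := ⟨k - 1, by omega⟩
  simp only [show 2 * (m + 1) = 2 * m + 2 from by ring,
    show 2 * (m + 1) - 1 = 2 * m + 1 from by omega]
  push_cast
  set φ : ℝ → ℝ := fun t => Real.exp (-a * t ^ (2 * m + 2)) with hφ
  have hInt : Integrable φ := by
    simpa [hφ, show 2 * (m + 1) = 2 * m + 2 from by ring] using
      aux_integrable (m + 1) (by omega) a ha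
  have hIpos : 0 < ∫ t : ℝ, φ t := by
    simpa [hφ, show 2 * (m + 1) = 2 * m + 2 from by ring] using
      aux_pos (m + 1) (by omega) a ha
  set I : ℝ := ∫ t : ℝ, φ t with hI
  have hIne : I ≠ 0 := ne_of_gt hIpos
  set Φ : ℝ → ℝ := fun x => ∫ t in Iic x, φ t with hΦdef
  set F : ℝ → ℝ := fun x => ∫ t in Ioi x, φ t with hFdef
  have hPx : ∀ x : ℝ, (∫ t in Iic x, I⁻¹ * φ t) = I⁻¹ * Φ x := fun x =>
    integral_const_mul _ _
  have hsum : ∀ x : ℝ, Φ x + F x = I := fun x =>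
    intervalIntegral.integral_Iic_add_Ioi hInt.integrableOn hInt.integrableOn
  have hsym : ∀ x : ℝ, Φ x = F (-x) := by
    intro x
    have h := integral_comp_neg_Iic x φ
    have he : ∀ t : ℝ, φ (-t) = φ t := fun t => by
      simp [hφ, Even.neg_pow (⟨m + 1, by ring⟩ : Even (2 * m + 2))]
    calc Φ x = ∫ t in Iic x, φ (-t) := by simp_rw [he]; rfl
    _ = F (-x) := h
  have hH : Tendsto (fun x : ℝ => 2 * ((m : ℝ) + 1) * a * x ^ (2 * m + 1) *
      Real.exp (a * x ^ (2 * m + 2)) * F x) atTop (nhds 1) := aux_core m a ha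
  constructor
  · have h2 : Tendsto (fun x : ℝ => (∫ t in Iic z, I⁻¹ * φ t) *
        (2 * ((m : ℝ) + 1) * a * x ^ (2 * m + 1) *
          Real.exp (a * x ^ (2 * m + 2)) * F x)) atTop
        (nhds ((∫ t in Iic z, I⁻¹ * φ t) * 1)) := tendsto_const_nhds.mul hH
    rw [mul_one] at h2
    apply h2.congr'
    filter_upwards [eventually_gt_atTop z] with x hx
    rw [if_neg (not_le.mpr hx), hPx x, hPx z]
    have h1P : 1 - I⁻¹ * Φ x = I⁻¹ * F x := by
      field_simp
      linarith [hsum x]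
    rw [h1P]
    field_simp
  · have hcomp : Tendsto ((fun x : ℝ => 2 * ((m : ℝ) + 1) * a * x ^ (2 * m + 1) *
        Real.exp (a * x ^ (2 * m + 2)) * F x) ∘ (fun x : ℝ => -x)) atBot (nhds 1) :=
      hH.comp tendsto_neg_atBot_atTop
    have h2 : Tendsto (fun x : ℝ => (1 - ∫ t in Iic z, I⁻¹ * φ t) *
        -((2 * ((m : ℝ) + 1) * a * (-x) ^ (2 * m + 1) *
          Real.exp (a * (-x) ^ (2 * m + 2)) * F (-x)))) atBot
        (nhds ((1 - ∫ t in Iic z, I⁻¹ * φ t) * -1)) :=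
      tendsto_const_nhds.mul hcomp.neg
    have h3 : ((1 - ∫ t in Iic z, I⁻¹ * φ t) * -1) =
        (∫ t in Iic z, I⁻¹ * φ t) - 1 := by ring
    rw [h3] at h2
    apply h2.congr'
    filter_upwards [eventually_le_atBot z] with x hx
    rw [if_pos hx, hPx x, hPx z]
    rw [Odd.neg_pow (⟨m, by ring⟩ : Odd (2 * m + 1)),
      Even.neg_pow (⟨m + 1, by ring⟩ : Even (2 * m + 2)), ← hsym x]
    field_simp
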